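/- Let α ∈ [0,1]. For any qubit states ρ_x indexed by x = (x₀,x₁) ∈ {0,1}², any 2×2 complex unitary matrices U₀, U₁, and any two-outcome qubit POVMs (C^z_0, C^z_1) for z ∈ {0,1}, the quantity P = α/2 + ((1−α)/16)·Σ_{x∈{0,1}²} Σ_{y∈{0,1}} Σ_{z∈{0,1}} tr(U_y ρ_x U_y† C^z_{x_z}) satisfies P ≤ α/2 + (1−α)(1/2 + 1/(2√2)) = 1/2 + (1−α)/(2√2). (This is the bound on the average success probability for the 'unitary' projective strategy, where Bob always outputs b = 0 and applies a unitary channel U_y; the first term α/2 is Bob's guessing contribution since exactly half of the pairs x have x_y = 0.) -/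

import Mathlib

open Matrix
open scoped ComplexOrder

noncomputable section

abbrev Mat2 := Matrix (Fin 2) (Fin 2) ℂ

/-- A qubit state: a positive semidefinite 2×2 complex matrix with unit trace. -/
def IsQubitState (ρ : Mat2) : Prop := ρ.PosSemidef ∧ ρ.trace = 1

/-- A two-outcome qubit POVM: a pair of positive semidefinite matrices summing to the identity. -/
def IsPOVMPair (E₀ E₁ : Mat2) : Prop := E₀.PosSemidef ∧ E₁.PosSemidef ∧ E₀ + E₁ = 1

/-- The `y`-th bit of the pair `(x₀, x₁)`. -/
def sel (x₀ x₁ y : Fin 2) : Fin 2 := if y = 0 then x₀ else x₁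


/-- Cauchy–Schwarz in dimension 3. -/
lemma cs3 (u1 u2 u3 v1 v2 v3 : ℝ) :
    u1*v1 + u2*v2 + u3*v3 ≤
      Real.sqrt (u1^2+u2^2+u3^2) * Real.sqrt (v1^2+v2^2+v3^2) := by
  have hA0 : (0:ℝ) ≤ Real.sqrt (u1^2+u2^2+u3^2) := Real.sqrt_nonneg _
  have hB0 : (0:ℝ) ≤ Real.sqrt (v1^2+v2^2+v3^2) := Real.sqrt_nonneg _
  have hA : (Real.sqrt (u1^2+u2^2+u3^2))^2 = u1^2+u2^2+u3^2 :=
    Real.sq_sqrt (by positivity)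
  have hB : (Real.sqrt (v1^2+v2^2+v3^2))^2 = v1^2+v2^2+v3^2 :=
    Real.sq_sqrt (by positivity)
  have hd2 : (u1*v1 + u2*v2 + u3*v3)^2
      ≤ (Real.sqrt (u1^2+u2^2+u3^2) * Real.sqrt (v1^2+v2^2+v3^2))^2 := by
    rw [mul_pow, hA, hB]
    nlinarith [sq_nonneg (u1*v2 - u2*v1), sq_nonneg (u1*v3 - u3*v1), sq_nonneg (u2*v3 - u3*v2)]
  calc u1*v1 + u2*v2 + u3*v3 ≤ |u1*v1 + u2*v2 + u3*v3| := le_abs_self _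
    _ = Real.sqrt ((u1*v1 + u2*v2 + u3*v3)^2) := (Real.sqrt_sq_eq_abs _).symm
    _ ≤ Real.sqrt ((Real.sqrt (u1^2+u2^2+u3^2) * Real.sqrt (v1^2+v2^2+v3^2))^2) :=
        Real.sqrt_le_sqrt hd2
    _ = |Real.sqrt (u1^2+u2^2+u3^2) * Real.sqrt (v1^2+v2^2+v3^2)| := Real.sqrt_sq_eq_abs _
    _ = _ := abs_of_nonneg (mul_nonneg hA0 hB0)

/-- Key single-state bound: overlap with a Hermitian matrix given by real parameters. -/
lemma real_bound (p sr si a d cr ci : ℝ) (hp0 : 0 ≤ p) (hp1 : p ≤ 1)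
    (hs : sr^2+si^2 ≤ p*(1-p)) :
    p*a + (1-p)*d + 2*(sr*cr+si*ci)
      ≤ (a+d)/2 + Real.sqrt (((a-d)/2)^2 + (cr^2+ci^2)) := by
  have cs := cs3 (p-1/2) sr si (a-d) (2*cr) (2*ci)
  have h1 : Real.sqrt ((p-1/2)^2+sr^2+si^2) ≤ 1/2 := by
    calc Real.sqrt ((p-1/2)^2+sr^2+si^2) ≤ Real.sqrt ((1/2)^2) :=
          Real.sqrt_le_sqrt (by nlinarith)
      _ = 1/2 := Real.sqrt_sq (by norm_num)
  have h2 : Real.sqrt ((a-d)^2+(2*cr)^2+(2*ci)^2)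
      = 2 * Real.sqrt (((a-d)/2)^2 + (cr^2+ci^2)) := by
    rw [show (a-d)^2+(2*cr)^2+(2*ci)^2 = 4*(((a-d)/2)^2 + (cr^2+ci^2)) by ring,
      show (4:ℝ) = 2^2 by norm_num, Real.sqrt_mul (by positivity), Real.sqrt_sq (by norm_num)]
  have h3 : Real.sqrt ((p-1/2)^2+sr^2+si^2) * Real.sqrt ((a-d)^2+(2*cr)^2+(2*ci)^2)
      ≤ (1/2) * (2 * Real.sqrt (((a-d)/2)^2 + (cr^2+ci^2))) := by
    rw [h2]
    exact mul_le_mul_of_nonneg_right h1 (by positivity) |>.trans (le_refl _)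
  nlinarith [cs, h3]

/-- Bloch-vector constraint from POVM element positivity. -/
lemma bloch_small (a d cr ci : ℝ) (ha : 0 ≤ a) (hd : 0 ≤ d) (ha1 : a ≤ 1) (hd1 : d ≤ 1)
    (h1 : cr^2+ci^2 ≤ a*d) (h2 : cr^2+ci^2 ≤ (1-a)*(1-d)) :
    ((a-d)/2)^2 + (cr^2+ci^2) ≤ 1/4 := by
  rcases le_total (a+d) 1 with h | h
  · nlinarith
  · nlinarith

/-- Combined numeric bound. -/
lemma numeric (P Q X Y : ℝ) (hX : 0 ≤ X) (hY : 0 ≤ Y)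
    (h1 : P^2 + Q^2 + X + Y ≤ 1) :
    Real.sqrt (P^2 + X) + Real.sqrt (Q^2 + Y) ≤ Real.sqrt 2 := by
  have hA0 := Real.sqrt_nonneg (P^2+X)
  have hB0 := Real.sqrt_nonneg (Q^2+Y)
  have hA : (Real.sqrt (P^2+X))^2 = P^2+X := Real.sq_sqrt (by positivity)
  have hB : (Real.sqrt (Q^2+Y))^2 = Q^2+Y := Real.sq_sqrt (by positivity)
  have h2 : (Real.sqrt (P^2+X) + Real.sqrt (Q^2+Y))^2 ≤ 2 := by
    nlinarith [sq_nonneg (Real.sqrt (P^2+X) - Real.sqrt (Q^2+Y))]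
  calc Real.sqrt (P^2+X) + Real.sqrt (Q^2+Y)
      = Real.sqrt ((Real.sqrt (P^2+X) + Real.sqrt (Q^2+Y))^2) :=
        (Real.sqrt_sq (by positivity)).symm
    _ ≤ Real.sqrt 2 := Real.sqrt_le_sqrt h2

lemma quad_form {A : Mat2} (hA : A.PosSemidef) (x0 x1 : ℂ) :
    0 ≤ ((starRingEnd ℂ) x0 * (A 0 0 * x0 + A 0 1 * x1)
        + (starRingEnd ℂ) x1 * (A 1 0 * x0 + A 1 1 * x1)).re := by
  have h := hA.dotProduct_mulVec_nonneg ![x0, x1]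
  rw [Complex.le_def] at h
  simpa [dotProduct, mulVec, Fin.sum_univ_two, mul_comm] using h.1

lemma herm_offdiag {A : Mat2} (hA : A.IsHermitian) : A 1 0 = (starRingEnd ℂ) (A 0 1) := by
  have := congrFun (congrFun hA 1) 0
  simpa [Matrix.conjTranspose_apply] using this.symm

lemma herm_diag_im {A : Mat2} (hA : A.IsHermitian) (i : Fin 2) : (A i i).im = 0 := by
  have := congrFun (congrFun hA i) i
  rw [Matrix.conjTranspose_apply] at this
  have := congrArg Complex.im this
  simp at this
  linarith

lemma psd_diag_nonneg {A : Mat2} (hA : A.PosSemidef) :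
    0 ≤ (A 0 0).re ∧ 0 ≤ (A 1 1).re := by
  constructor
  · have := quad_form hA 1 0
    simpa using this
  · have := quad_form hA 0 1
    simpa using this

lemma psd_det {A : Mat2} (hA : A.PosSemidef) :
    Complex.normSq (A 0 1) ≤ (A 0 0).re * (A 1 1).re := by
  obtain ⟨ha, hd⟩ := psd_diag_nonneg hA
  have him0 := herm_diag_im hA.1 0
  have him1 := herm_diag_im hA.1 1
  have hoff := herm_offdiag hA.1
  set a := (A 0 0).re with ha'
  set d := (A 1 1).re with hd'
  set c := A 0 1 with hc'
  have hA00 : A 0 0 = (a : ℂ) := Complex.ext rfl him0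
  have hA11 : A 1 1 = (d : ℂ) := Complex.ext rfl him1
  -- x = (c, -a)
  have h1 := quad_form hA c (-(a:ℂ))
  rw [hA00, hA11, hoff] at h1
  have h1' : 0 ≤ a * (a * d - Complex.normSq c) := by
    have : ((starRingEnd ℂ) c * ((a:ℂ) * c + c * -(a:ℂ))
        + (starRingEnd ℂ) (-(a:ℂ)) * ((starRingEnd ℂ) c * c + (d:ℂ) * -(a:ℂ))).re
        = a * (a * d - Complex.normSq c) := by
      simp [Complex.normSq_apply, Complex.mul_re, Complex.mul_im, Complex.add_re]
      ring
    linarith [h1, this ▸ h1]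
  -- x = (-d, conj c)
  have h2 := quad_form hA (-(d:ℂ)) ((starRingEnd ℂ) c)
  rw [hA00, hA11, hoff] at h2
  have h2' : 0 ≤ d * (a * d - Complex.normSq c) := by
    have : ((starRingEnd ℂ) (-(d:ℂ)) * ((a:ℂ) * -(d:ℂ) + c * (starRingEnd ℂ) c)
        + (starRingEnd ℂ) ((starRingEnd ℂ) c) * ((starRingEnd ℂ) c * -(d:ℂ) + (d:ℂ) * (starRingEnd ℂ) c)).re
        = d * (a * d - Complex.normSq c) := by
      simp [Complex.normSq_apply, Complex.mul_re, Complex.mul_im, Complex.add_re]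
      ring
    linarith [this ▸ h2]
  -- x = (c, -1)
  have h3 := quad_form hA c (-1 : ℂ)
  rw [hA00, hA11, hoff] at h3
  have h3' : 0 ≤ a * Complex.normSq c - 2 * Complex.normSq c + d := by
    have : ((starRingEnd ℂ) c * ((a:ℂ) * c + c * (-1:ℂ))
        + (starRingEnd ℂ) (-1:ℂ) * ((starRingEnd ℂ) c * c + (d:ℂ) * (-1:ℂ))).re
        = a * Complex.normSq c - 2 * Complex.normSq c + d := by
      simp [Complex.normSq_apply, Complex.mul_re, Complex.mul_im, Complex.add_re]
      ring
    linarith [this ▸ h3]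
  have hn : 0 ≤ Complex.normSq c := Complex.normSq_nonneg c
  rcases ha.lt_or_eq with hpos | hzero
  · nlinarith
  · rcases hd.lt_or_eq with hdpos | hdzero
    · nlinarith
    · nlinarith

lemma trace_mul_re (σ M : Mat2) :
    ((σ * M).trace).re
      = (σ 0 0).re * (M 0 0).re - (σ 0 0).im * (M 0 0).im
      + (σ 0 1).re * (M 1 0).re - (σ 0 1).im * (M 1 0).im
      + (σ 1 0).re * (M 0 1).re - (σ 1 0).im * (M 0 1).im
      + (σ 1 1).re * (M 1 1).re - (σ 1 1).im * (M 1 1).im := by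
  simp [Matrix.trace_fin_two, Matrix.mul_apply, Fin.sum_univ_two, Complex.add_re,
    Complex.mul_re]
  ring

/-- Bound the overlap of a qubit state with the sum of two PSD matrices. -/
lemma state_pair_bound {σ X Y : Mat2} (hσ : IsQubitState σ)
    (hX : X.IsHermitian) (hY : Y.IsHermitian) :
    ((σ*X).trace).re + ((σ*Y).trace).re
      ≤ ((X 0 0).re + (Y 0 0).re + (X 1 1).re + (Y 1 1).re)/2
        + Real.sqrt ((((X 0 0).re + (Y 0 0).re - (X 1 1).re - (Y 1 1).re)/2)^2
            + (((X 0 1).re + (Y 0 1).re)^2 + ((X 0 1).im + (Y 0 1).im)^2)) := by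
  obtain ⟨hσp, hσt⟩ := hσ
  have hp0 := (psd_diag_nonneg hσp).1
  have hq0 := (psd_diag_nonneg hσp).2
  have hσ00 := herm_diag_im hσp.1 0
  have hσ11 := herm_diag_im hσp.1 1
  have hσoff := herm_offdiag hσp.1
  have hdet := psd_det hσp
  have htr : (σ 0 0).re + (σ 1 1).re = 1 := by
    have := congrArg Complex.re hσt
    simpa [Matrix.trace_fin_two, Complex.add_re] using this
  set p := (σ 0 0).re
  have hp1 : p ≤ 1 := by linarith
  have h11 : (σ 1 1).re = 1 - p := by linarith
  have hs : (σ 0 1).re^2 + (σ 0 1).im^2 ≤ p * (1-p) := by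
    have := hdet
    rw [Complex.normSq_apply, h11] at this
    nlinarith [this]
  have hXd0 := herm_diag_im hX 0
  have hXd1 := herm_diag_im hX 1
  have hYd0 := herm_diag_im hY 0
  have hYd1 := herm_diag_im hY 1
  have hXoff := herm_offdiag hX
  have hYoff := herm_offdiag hY
  have key := real_bound p (σ 0 1).re (σ 0 1).im
      ((X 0 0).re + (Y 0 0).re) ((X 1 1).re + (Y 1 1).re)
      ((X 0 1).re + (Y 0 1).re) ((X 0 1).im + (Y 0 1).im) hp0 hp1 hs
  have eσ10re : (σ 1 0).re = (σ 0 1).re := by rw [hσoff]; simp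
  have eσ10im : (σ 1 0).im = -(σ 0 1).im := by rw [hσoff]; simp
  have eX10re : (X 1 0).re = (X 0 1).re := by rw [hXoff]; simp
  have eX10im : (X 1 0).im = -(X 0 1).im := by rw [hXoff]; simp
  have eY10re : (Y 1 0).re = (Y 0 1).re := by rw [hYoff]; simp
  have eY10im : (Y 1 0).im = -(Y 0 1).im := by rw [hYoff]; simp
  have earg : (((X 0 0).re + (Y 0 0).re - ((X 1 1).re + (Y 1 1).re)) / 2) ^ 2
      + (((X 0 1).re + (Y 0 1).re) ^ 2 + ((X 0 1).im + (Y 0 1).im) ^ 2)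
      = (((X 0 0).re + (Y 0 0).re - (X 1 1).re - (Y 1 1).re)/2)^2
        + (((X 0 1).re + (Y 0 1).re)^2 + ((X 0 1).im + (Y 0 1).im)^2) := by ring
  rw [earg] at key
  rw [trace_mul_re σ X, trace_mul_re σ Y]
  rw [hσ00, hσ11, hXd0, hXd1, hYd0, hYd1, eσ10re, eσ10im, eX10re, eX10im, eY10re, eY10im, h11]
  nlinarith [key]

lemma sub_one_entries (E : Mat2) :
    (1-E) 0 0 = 1 - E 0 0 ∧ (1-E) 1 1 = 1 - E 1 1 ∧ (1-E) 0 1 = -(E 0 1) := by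
  refine ⟨?_, ?_, ?_⟩ <;> simp [Matrix.sub_apply, Matrix.one_apply]

lemma mul_self_to_sq {x y B : ℝ} (h : x*x + y*y ≤ B) : x^2+y^2 ≤ B := by
  rw [pow_two, pow_two]; exact h

lemma one_sub_nonneg_to_le {a : ℝ} (h : 0 ≤ 1 - a) : a ≤ 1 := by linarith

lemma sum_sq_bound (a d cr ci e g fr fi : ℝ)
    (hb1 : ((a-d)/2)^2 + (cr^2+ci^2) ≤ 1/4)
    (hb2 : ((e-g)/2)^2 + (fr^2+fi^2) ≤ 1/4) :
    ((a+e-d-g)/2)^2 + ((a-e-d+g)/2)^2 + ((cr+fr)^2+(ci+fi)^2) + ((cr-fr)^2+(ci-fi)^2) ≤ 1 := by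
  nlinarith

lemma add4_le (t1 t2 t3 t4 t5 t6 t7 t8 R1 R2 R3 R4 S : ℝ)
    (b1 : t1+t2 ≤ R1) (b2 : t3+t4 ≤ R2) (b3 : t5+t6 ≤ R3) (b4 : t7+t8 ≤ R4)
    (hsum : R1+R2+R3+R4 ≤ S) :
    t1+t2+t3+t4+t5+t6+t7+t8 ≤ S := by linarith

lemma two_mul_le {A B : ℝ} (h : A ≤ B) : 4 + 2*A ≤ 4 + 2*B := by linarith

set_option maxHeartbeats 1000000 in
lemma key_y (σ00 σ01 σ10 σ11 E F : Mat2)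
    (h00 : IsQubitState σ00) (h01 : IsQubitState σ01)
    (h10 : IsQubitState σ10) (h11 : IsQubitState σ11)
    (hE : E.PosSemidef) (hE' : (1-E).PosSemidef)
    (hF : F.PosSemidef) (hF' : (1-F).PosSemidef) :
    ((σ00*E).trace).re + ((σ00*F).trace).re
    + ((σ01*E).trace).re + ((σ01*(1-F)).trace).re
    + ((σ10*(1-E)).trace).re + ((σ10*F).trace).re
    + ((σ11*(1-E)).trace).re + ((σ11*(1-F)).trace).re
      ≤ 4 + 2 * Real.sqrt 2 := by
  obtain ⟨eE0, eE1, eEo⟩ := sub_one_entries E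
  obtain ⟨eF0, eF1, eFo⟩ := sub_one_entries F
  set a := (E 0 0).re with ha'
  set d := (E 1 1).re with hd'
  set cr := (E 0 1).re
  set ci := (E 0 1).im
  set e := (F 0 0).re
  set g := (F 1 1).re
  set fr := (F 0 1).re
  set fi := (F 0 1).im
  -- entry facts
  have ha0 := (psd_diag_nonneg hE).1
  have hd0 := (psd_diag_nonneg hE).2
  have he0 := (psd_diag_nonneg hF).1
  have hg0 := (psd_diag_nonneg hF).2
  have ha1 : a ≤ 1 := by
    have h := (psd_diag_nonneg hE').1; rw [eE0] at h
    exact one_sub_nonneg_to_le (by simpa using h)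
  have hd1 : d ≤ 1 := by
    have h := (psd_diag_nonneg hE').2; rw [eE1] at h
    exact one_sub_nonneg_to_le (by simpa using h)
  have he1 : e ≤ 1 := by
    have h := (psd_diag_nonneg hF').1; rw [eF0] at h
    exact one_sub_nonneg_to_le (by simpa using h)
  have hg1 : g ≤ 1 := by
    have h := (psd_diag_nonneg hF').2; rw [eF1] at h
    exact one_sub_nonneg_to_le (by simpa using h)
  have hdetE : cr^2+ci^2 ≤ a*d := by
    have h := psd_det hE; rw [Complex.normSq_apply] at h; exact mul_self_to_sq h
  have hdetE' : cr^2+ci^2 ≤ (1-a)*(1-d) := by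
    have h := psd_det hE'; rw [eE0, eE1, eEo] at h
    refine mul_self_to_sq ?_
    simpa [Complex.normSq_apply, Complex.sub_re] using h
  have hdetF : fr^2+fi^2 ≤ e*g := by
    have h := psd_det hF; rw [Complex.normSq_apply] at h; exact mul_self_to_sq h
  have hdetF' : fr^2+fi^2 ≤ (1-e)*(1-g) := by
    have h := psd_det hF'; rw [eF0, eF1, eFo] at h
    refine mul_self_to_sq ?_
    simpa [Complex.normSq_apply, Complex.sub_re] using h
  -- the four state bounds
  have b1 := state_pair_bound h00 hE.1 hF.1
  have b2 := state_pair_bound h01 hE.1 hF'.1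
  have b3 := state_pair_bound h10 hE'.1 hF.1
  have b4 := state_pair_bound h11 hE'.1 hF'.1
  rw [eE0, eE1, eEo] at b3 b4
  rw [eF0, eF1, eFo] at b2 b4
  simp only [Complex.sub_re, Complex.one_re, Complex.neg_re, Complex.neg_im] at b2 b3 b4
  set P := (a + e - d - g)/2 with hP
  set Q := (a - e - d + g)/2 with hQ
  set X := (cr+fr)^2+(ci+fi)^2 with hX
  set Y := (cr-fr)^2+(ci-fi)^2 with hY
  have r1 : ((a + e - d - g)/2)^2 + ((cr+fr)^2+(ci+fi)^2) = P^2 + X := by rw [hP, hX]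
  have e2 : ((a + (1 - e) - d - (1 - g))/2)^2 + ((cr + -fr)^2+(ci + -fi)^2) = Q^2 + Y := by
    rw [hQ, hY]; ring
  have e3 : ((1 - a + e - (1 - d) - g)/2)^2 + ((-cr + fr)^2+(-ci + fi)^2) = Q^2 + Y := by
    rw [hQ, hY]; ring
  have e4 : ((1 - a + (1 - e) - (1 - d) - (1 - g))/2)^2 + ((-cr + -fr)^2+(-ci + -fi)^2)
      = P^2 + X := by
    rw [hP, hX]; ring
  rw [r1] at b1
  rw [e2] at b2
  rw [e3] at b3
  rw [e4] at b4
  have hb1 := bloch_small a d cr ci ha0 hd0 ha1 hd1 hdetE hdetE'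
  have hb2 := bloch_small e g fr fi he0 hg0 he1 hg1 hdetF hdetF'
  have hnum : Real.sqrt (P^2+X) + Real.sqrt (Q^2+Y) ≤ Real.sqrt 2 := by
    refine numeric P Q X Y (by positivity) (by positivity) ?_
    rw [hP, hQ, hX, hY]
    exact sum_sq_bound a d cr ci e g fr fi hb1 hb2
  refine add4_le _ _ _ _ _ _ _ _ _ _ _ _ _ b1 b2 b3 b4 ?_
  have etot : ((a + e + d + g)/2 + Real.sqrt (P^2+X))
      + ((a + (1-e) + d + (1-g))/2 + Real.sqrt (Q^2+Y))
      + ((1 - a + e + (1 - d) + g)/2 + Real.sqrt (Q^2+Y))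
      + ((1 - a + (1-e) + (1 - d) + (1-g))/2 + Real.sqrt (P^2+X))
      = 4 + 2*(Real.sqrt (P^2+X) + Real.sqrt (Q^2+Y)) := by ring
  rw [etot]
  exact two_mul_le hnum

lemma conj_state {U ρ : Mat2} (hU : U ∈ Matrix.unitaryGroup (Fin 2) ℂ)
    (hρ : IsQubitState ρ) : IsQubitState (U * ρ * Uᴴ) := by
  refine ⟨hρ.1.mul_mul_conjTranspose_same U, ?_⟩
  have h1 : Uᴴ * U = 1 := by
    have := Matrix.mem_unitaryGroup_iff'.mp hU
    simpa [Matrix.star_eq_conjTranspose] using this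
  rw [Matrix.trace_mul_comm, ← Matrix.mul_assoc, h1, one_mul, hρ.2]

theorem unitary_strategy_bound
    (α : ℝ) (hα : α ∈ Set.Icc (0 : ℝ) 1)
    (ρ : Fin 2 → Fin 2 → Mat2) (hρ : ∀ x₀ x₁, IsQubitState (ρ x₀ x₁))
    (U : Fin 2 → Mat2) (hU : ∀ y, U y ∈ Matrix.unitaryGroup (Fin 2) ℂ)
    (C : Fin 2 → Fin 2 → Mat2) (hC : ∀ z, IsPOVMPair (C z 0) (C z 1)) :
    α / 2 + (1 - α) / 16 *
      ∑ x₀ : Fin 2, ∑ x₁ : Fin 2, ∑ y : Fin 2, ∑ z : Fin 2,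
        ((U y * ρ x₀ x₁ * (U y)ᴴ * C z (sel x₀ x₁ z)).trace).re
    ≤ 1 / 2 + (1 - α) / (2 * Real.sqrt 2) := by
  have hC0 : C 0 1 = 1 - C 0 0 := eq_sub_of_add_eq' (hC 0).2.2
  have hC1 : C 1 1 = 1 - C 1 0 := eq_sub_of_add_eq' (hC 1).2.2
  have hE := (hC 0).1
  have hE' : (1 - C 0 0).PosSemidef := hC0 ▸ (hC 0).2.1
  have hF := (hC 1).1
  have hF' : (1 - C 1 0).PosSemidef := hC1 ▸ (hC 1).2.1
  have hσ : ∀ y x₀ x₁, IsQubitState (U y * ρ x₀ x₁ * (U y)ᴴ) :=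
    fun y x₀ x₁ => conj_state (hU y) (hρ x₀ x₁)
  have k0 := key_y _ _ _ _ _ _ (hσ 0 0 0) (hσ 0 0 1) (hσ 0 1 0) (hσ 0 1 1) hE hE' hF hF'
  have k1 := key_y _ _ _ _ _ _ (hσ 1 0 0) (hσ 1 0 1) (hσ 1 1 0) (hσ 1 1 1) hE hE' hF hF'
  have hS : ∑ x₀ : Fin 2, ∑ x₁ : Fin 2, ∑ y : Fin 2, ∑ z : Fin 2,
        ((U y * ρ x₀ x₁ * (U y)ᴴ * C z (sel x₀ x₁ z)).trace).re
      ≤ 8 + 4 * Real.sqrt 2 := by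
    simp only [Fin.sum_univ_two, sel]
    norm_num
    rw [hC0, hC1]
    linarith [k0, k1]
  have hα1 : α ≤ 1 := hα.2
  have hs2 : Real.sqrt 2 * Real.sqrt 2 = 2 := Real.mul_self_sqrt (by norm_num)
  have hspos : (0:ℝ) < Real.sqrt 2 := by positivity
  have step : (1 - α) / 16 * (∑ x₀ : Fin 2, ∑ x₁ : Fin 2, ∑ y : Fin 2, ∑ z : Fin 2,
        ((U y * ρ x₀ x₁ * (U y)ᴴ * C z (sel x₀ x₁ z)).trace).re)
      ≤ (1 - α) / 16 * (8 + 4 * Real.sqrt 2) :=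
    mul_le_mul_of_nonneg_left hS (by linarith)
  have efin : α / 2 + (1 - α) / 16 * (8 + 4 * Real.sqrt 2)
      = 1 / 2 + (1 - α) / (2 * Real.sqrt 2) := by
    field_simp
    linear_combination (8 - 8*α) * hs2
  linarith [step, efin.ge, efin.le]
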